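/- The ratio of minimum detectable speeds using only the RN16 signal versus the combined RN16-plus-EPC signal equals √(C_T^{(2)}/T₁³), where C_T^{(2)} = (T₁+T₂)³ + 12T₁T₂T_pause(T₁+T₂+T_pause)/(T₁+T₂); in particular, for T₁ = 7.8 ms, T₂ = 27 ms, T_pause = 1.4 ms the combined-signal v_min is strictly smaller than the single-signal (RN16) v_min by a factor greater than 9. -/

import Mathlib

noncomputable def C_T2 (T₁ T₂ T_pause : ℝ) : ℝ :=
  (T₁ + T₂) ^ 3 + 12 * T₁ * T₂ * T_pause * (T₁ + T₂ + T_pause) / (T₁ + T₂)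

lemma C_T2_pos {T₁ T₂ T_pause : ℝ} (h1 : 0 < T₁) (h2 : 0 < T₂) (hp : 0 ≤ T_pause) :
    0 < C_T2 T₁ T₂ T_pause := by
  have hs : 0 < T₁ + T₂ := by linarith
  have : 0 ≤ 12 * T₁ * T₂ * T_pause * (T₁ + T₂ + T_pause) / (T₁ + T₂) := by
    apply div_nonneg _ hs.le
    have : 0 ≤ T₁ + T₂ + T_pause := by linarith
    positivity
  have := pow_pos hs 3
  unfold C_T2; linarith

theorem stmt_16 (K : ℝ) (hK : 0 < K) :
    (∀ T₁ T₂ T_pause : ℝ, 0 < T₁ → 0 < T₂ → 0 ≤ T_pause →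
        (K / Real.sqrt (T₁ ^ 3)) / (K / Real.sqrt (C_T2 T₁ T₂ T_pause)) =
          Real.sqrt (C_T2 T₁ T₂ T_pause / T₁ ^ 3)) ∧
      9 * (K / Real.sqrt (C_T2 (7.8e-3) (27e-3) (1.4e-3))) <
        K / Real.sqrt ((7.8e-3 : ℝ) ^ 3) := by
  constructor
  · intro T₁ T₂ T_pause h1 h2 hp
    have hC := C_T2_pos h1 h2 hp
    have ha : 0 < Real.sqrt (T₁ ^ 3) := Real.sqrt_pos.mpr (pow_pos h1 3)
    have hb : 0 < Real.sqrt (C_T2 T₁ T₂ T_pause) := Real.sqrt_pos.mpr hC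
    rw [Real.sqrt_div hC.le]
    field_simp
  · have hC := C_T2_pos (by norm_num : (0:ℝ) < 7.8e-3) (by norm_num : (0:ℝ) < 27e-3)
      (by norm_num : (0:ℝ) ≤ 1.4e-3)
    have ha : (0:ℝ) < (7.8e-3 : ℝ) ^ 3 := by norm_num
    have hsa : 0 < Real.sqrt ((7.8e-3 : ℝ) ^ 3) := Real.sqrt_pos.mpr ha
    have hsb : 0 < Real.sqrt (C_T2 (7.8e-3) (27e-3) (1.4e-3)) := Real.sqrt_pos.mpr hC
    have key : 9 * Real.sqrt ((7.8e-3 : ℝ) ^ 3) < Real.sqrt (C_T2 (7.8e-3) (27e-3) (1.4e-3)) := by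
      have h9 : (9:ℝ) = Real.sqrt 81 := by
        rw [show (81:ℝ) = 9^2 by norm_num, Real.sqrt_sq (by norm_num)]
      rw [h9, ← Real.sqrt_mul (by norm_num)]
      apply Real.sqrt_lt_sqrt (by positivity)
      unfold C_T2
      norm_num
    have e : 9 * (K / Real.sqrt (C_T2 (7.8e-3) (27e-3) (1.4e-3))) =
        (9 * K) / Real.sqrt (C_T2 (7.8e-3) (27e-3) (1.4e-3)) := by ring
    rw [e, div_lt_div_iff₀ hsb hsa]
    nlinarith [key, hK, hsa, hsb]
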